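/- (Redundance-based strengthening rule.) Let (𝒞, 𝒟, g, z, T, ε) be an (F, f)-valid configuration and let C ⊆ ℝ^n. Suppose there exists a witness ω : ℝ^n → ℝ^n such that for all x ∈ ℝ^n: if x ∈ ⋂(𝒞 ∪ 𝒟) and x ∉ C, then ω(x) ∈ ⋂(𝒞 ∪ 𝒟 ∪ {C}), ω(x) ⪰_T x, and g(ω(x)) ≤ g(x). Then (𝒞, 𝒟 ∪ {C}, g, z, T, ε) is also (F, f)-valid. -/

import Mathlib

open Set

/-- Apply a signed index list (index, sign) to a point, giving the vector
`(sign(i₁)·x_{|i₁|}, …, sign(i_k)·x_{|i_k|})` as a list of reals.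
`true` encodes a positive sign, `false` a negative sign. -/
def sigApply {n : ℕ} (σ : List (Fin n × Bool)) (x : Fin n → ℝ) : List ℝ :=
  σ.map (fun p => if p.2 then x p.1 else -(x p.1))

/-- Strict ε-lexicographic order `x ≻_ε y` on lists of reals:
`x ≠ y` and, at the first index where they differ, `x i ≥ y i + ε`. -/
def lexGt (ε : ℝ) : List ℝ → List ℝ → Prop
  | a :: as, b :: bs => (a = b ∧ lexGt ε as bs) ∨ (a ≠ b ∧ b + ε ≤ a)
  | _, _ => False

/-- A branching tree `T = (V, E, B, σ)`: a finite arborescence (encoded by a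
parent map from which every node reaches the root), a branching constraint
`B v ⊆ ℝⁿ` for every node with `B r = ℝⁿ`, and a list `σ v` of signed variable
indices with pairwise distinct absolute values for every node. -/
structure BranchingTree (n : ℕ) where
  V : Type
  fin : Fintype V
  root : V
  parent : V → Option V
  parent_root : parent root = none
  parent_isSome : ∀ v, v ≠ root → (parent v).isSome
  reach_root : ∀ v, Relation.ReflTransGen (fun a b => parent a = some b) v root
  B : V → Set (Fin n → ℝ)
  B_root : B root = Set.univ
  sig : V → List (Fin n × Bool)
  sig_nodup : ∀ v, ((sig v).map Prod.fst).Nodup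

namespace BranchingTree

variable {n : ℕ} (T : BranchingTree n)

/-- The set of children `δ⁺(u)` of a node. -/
def children (u : T.V) : Set T.V := {v | T.parent v = some u}

/-- A leaf is a node without children. -/
def IsLeaf (v : T.V) : Prop := T.children v = ∅

/-- The nodes on the root-to-`v` path (the ancestors of `v`, including `v`). -/
def pathNodes (v : T.V) : Set T.V :=
  {u | Relation.ReflTransGen (fun a b => T.parent a = some b) v u}

/-- `ℬ_v`: the branching constraints attached to the nodes on the root-to-`v` path. -/
def pathCons (v : T.V) : Set (Set (Fin n → ℝ)) := T.B '' T.pathNodes v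

/-- Depth of a node: the number of nodes on its root path. -/
noncomputable def depth (v : T.V) : ℕ := (T.pathNodes v).ncard

/-- The feasible region `⋂(𝒞 ∪ ℬ_v)` of node `v`. -/
def region (𝒞 : Set (Set (Fin n → ℝ))) (v : T.V) : Set (Fin n → ℝ) :=
  ⋂₀ (𝒞 ∪ T.pathCons v)

/-- `T` is `𝒞`-consistent: (T3) the children of any non-leaf cover `⋂𝒞`;
(T5) `σ u` is a prefix of `σ v` for every child `v` of `u`;
(T6) every entry of `σ v (x)` is bounded above over `x ∈ ⋂𝒞`;
(T7) distinct children of `u` have `σ u`-disjoint branching constraints. -/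
def Consistent (𝒞 : Set (Set (Fin n → ℝ))) : Prop :=
  (∀ u : T.V, (T.children u).Nonempty → ⋂₀ 𝒞 ⊆ ⋃ v ∈ T.children u, T.B v) ∧
  (∀ u v : T.V, v ∈ T.children u → T.sig u <+: T.sig v) ∧
  (∀ v : T.V, ∀ i : Fin (T.sig v).length,
    BddAbove ((fun x => if ((T.sig v).get i).2 then x ((T.sig v).get i).1
      else -(x ((T.sig v).get i).1)) '' ⋂₀ 𝒞)) ∧
  (∀ u v w : T.V, v ∈ T.children u → w ∈ T.children u → v ≠ w →
    sigApply (T.sig u) '' T.B v ∩ sigApply (T.sig u) '' T.B w = ∅)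

/-- `v` is a deepest common node `dcn(x,y)`: both `x` and `y` lie in the
feasible region of `v`, and `v` is deepest with this property. -/
def IsDCN (𝒞 : Set (Set (Fin n → ℝ))) (v : T.V) (x y : Fin n → ℝ) : Prop :=
  x ∈ T.region 𝒞 v ∧ y ∈ T.region 𝒞 v ∧
  ∀ w : T.V, x ∈ T.region 𝒞 w → y ∈ T.region 𝒞 w → T.depth w ≤ T.depth v

/-- `x ⪰_T y` : with `v = dcn(x,y)`, `σ v (x) = σ v (y)` or `σ v (x) ≻_ε σ v (y)`. -/
def TreeGe (𝒞 : Set (Set (Fin n → ℝ))) (ε : ℝ) (x y : Fin n → ℝ) : Prop :=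
  ∃ v : T.V, T.IsDCN 𝒞 v x y ∧
    (sigApply (T.sig v) x = sigApply (T.sig v) y ∨
      lexGt ε (sigApply (T.sig v) x) (sigApply (T.sig v) y))

/-- `x ≻_{ε,T} y` : with `v = dcn(x,y)`, `σ v (x) ≻_ε σ v (y)`. -/
def TreeGt (𝒞 : Set (Set (Fin n → ℝ))) (ε : ℝ) (x y : Fin n → ℝ) : Prop :=
  ∃ v : T.V, T.IsDCN 𝒞 v x y ∧
    lexGt ε (sigApply (T.sig v) x) (sigApply (T.sig v) y)

end BranchingTree

/-- A configuration `(𝒞, 𝒟, g, z, T, ε)`. -/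
structure Config (n : ℕ) where
  core : Set (Set (Fin n → ℝ))
  derived : Set (Set (Fin n → ℝ))
  g : (Fin n → ℝ) → ℝ
  z : WithTop ℝ
  tree : BranchingTree n
  eps : ℝ

/-- `(F, f)`-validity of a configuration: (V1) the tree is core-consistent and
`ε > 0`; (V2) if `z < ∞` there is `x ∈ F` with `f x ≤ z`; (V3) for every real
`ẑ < z`, `F` contains a point of `f`-value `≤ ẑ` iff `⋂𝒞` contains a point of
`g`-value `≤ ẑ`; (V4) every `x ∈ ⋂𝒞` with `g x < z` is dominated by some
`y ∈ ⋂(𝒞 ∪ 𝒟)` with `y ⪰_T x` and `g y ≤ g x`. -/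
def Config.Valid {n : ℕ} (F : Set (Fin n → ℝ)) (f : (Fin n → ℝ) → ℝ)
    (K : Config n) : Prop :=
  (K.tree.Consistent K.core ∧ 0 < K.eps) ∧
  (K.z < ⊤ → ∃ x ∈ F, (f x : WithTop ℝ) ≤ K.z) ∧
  (∀ zh : ℝ, (zh : WithTop ℝ) < K.z →
    ((∃ x ∈ F, f x ≤ zh) ↔ ∃ x ∈ ⋂₀ K.core, K.g x ≤ zh)) ∧
  (∀ x ∈ ⋂₀ K.core, (K.g x : WithTop ℝ) < K.z →
    ∃ y ∈ ⋂₀ (K.core ∪ K.derived), K.tree.TreeGe K.core K.eps y x ∧ K.g y ≤ K.g x)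

/-- The implication constraint `[𝒜 ⇝ C] = (ℝⁿ \ ⋂𝒜) ∪ C`. -/
def implCon {n : ℕ} (𝒜 : Set (Set (Fin n → ℝ))) (C : Set (Fin n → ℝ)) :
    Set (Fin n → ℝ) := (⋂₀ 𝒜)ᶜ ∪ C

/-! ### Auxiliary lemmas -/

section LexLemmas

lemma lexGt_nil_left {ε : ℝ} {b : List ℝ} : ¬ lexGt ε [] b := by cases b <;> simp [lexGt]

lemma lexGt_nil_right {ε : ℝ} {a : List ℝ} : ¬ lexGt ε a [] := by cases a <;> simp [lexGt]

lemma lexGt_trans {ε : ℝ} (hε : 0 < ε) :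
    ∀ (a b c : List ℝ), lexGt ε a b → lexGt ε b c → lexGt ε a c
  | [], _, _, h1, _ => absurd h1 lexGt_nil_left
  | _ :: _, [], _, h1, _ => absurd h1 lexGt_nil_right
  | _ :: _, _ :: _, [], _, h2 => absurd h2 lexGt_nil_right
  | x :: as, y :: bs, z :: cs, h1, h2 => by
      rcases h1 with ⟨rfl, h1⟩ | ⟨hne1, hle1⟩ <;> rcases h2 with ⟨rfl, h2⟩ | ⟨hne2, hle2⟩
      · exact Or.inl ⟨rfl, lexGt_trans hε as bs cs h1 h2⟩
      · exact Or.inr ⟨hne2, hle2⟩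
      · exact Or.inr ⟨hne1, hle1⟩
      · exact Or.inr ⟨by intro h; subst h; linarith, by linarith⟩

lemma lexGt_append {ε : ℝ} :
    ∀ (a b s t : List ℝ), lexGt ε a b → lexGt ε (a ++ s) (b ++ t)
  | [], _, _, _, h => absurd h lexGt_nil_left
  | _ :: _, [], _, _, h => absurd h lexGt_nil_right
  | x :: as, y :: bs, s, t, h => by
      rcases h with ⟨rfl, h⟩ | ⟨hne, hle⟩
      · exact Or.inl ⟨rfl, lexGt_append as bs s t h⟩
      · exact Or.inr ⟨hne, hle⟩

lemma lexGt_of_append {ε : ℝ} :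
    ∀ (a b s t : List ℝ), a.length = b.length → lexGt ε (a ++ s) (b ++ t) →
      a = b ∨ lexGt ε a b
  | [], [], _, _, _, _ => Or.inl rfl
  | [], _ :: _, _, _, hlen, _ => by simp at hlen
  | _ :: _, [], _, _, hlen, _ => by simp at hlen
  | x :: as, y :: bs, s, t, hlen, h => by
      rcases h with ⟨rfl, h⟩ | ⟨hne, hle⟩
      · rcases lexGt_of_append as bs s t (by simpa using hlen) h with rfl | h'
        · exact Or.inl rfl
        · exact Or.inr (Or.inl ⟨rfl, h'⟩)
      · exact Or.inr (Or.inr ⟨hne, hle⟩)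

lemma sigApply_append {n : ℕ} (σ τ : List (Fin n × Bool)) (x : Fin n → ℝ) :
    sigApply (σ ++ τ) x = sigApply σ x ++ sigApply τ x := by simp [sigApply]

lemma sigRel_restrict {n : ℕ} {ε : ℝ} {σ₁ σ₂ : List (Fin n × Bool)} (h : σ₁ <+: σ₂)
    {x y : Fin n → ℝ}
    (hr : sigApply σ₂ x = sigApply σ₂ y ∨ lexGt ε (sigApply σ₂ x) (sigApply σ₂ y)) :
    sigApply σ₁ x = sigApply σ₁ y ∨ lexGt ε (sigApply σ₁ x) (sigApply σ₁ y) := by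
  obtain ⟨τ, rfl⟩ := h
  rw [sigApply_append, sigApply_append] at hr
  rcases hr with h | h
  · exact Or.inl (List.append_inj_left h (by simp [sigApply]))
  · rcases lexGt_of_append _ _ _ _ (by simp [sigApply]) h with h | h
    · exact Or.inl h
    · exact Or.inr h

lemma lexGt_sig_extend {n : ℕ} {ε : ℝ} {σ₁ σ₂ : List (Fin n × Bool)} (h : σ₁ <+: σ₂)
    {x y : Fin n → ℝ} (hgt : lexGt ε (sigApply σ₁ x) (sigApply σ₁ y)) :
    lexGt ε (sigApply σ₂ x) (sigApply σ₂ y) := by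
  obtain ⟨τ, rfl⟩ := h
  rw [sigApply_append, sigApply_append]
  exact lexGt_append _ _ _ _ hgt

lemma sigRel_comb {ε : ℝ} (hε : 0 < ε) {la lb lc : List ℝ}
    (h1 : la = lb ∨ lexGt ε la lb) (h2 : lb = lc ∨ lexGt ε lb lc) :
    la = lc ∨ lexGt ε la lc := by
  rcases h1 with rfl | h1 <;> rcases h2 with rfl | h2
  · exact Or.inl rfl
  · exact Or.inr h2
  · exact Or.inr h1
  · exact Or.inr (lexGt_trans hε _ _ _ h1 h2)

end LexLemmas

namespace BranchingTree

variable {n : ℕ} (T : BranchingTree n)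

lemma no_loop (a : T.V) : ¬ Relation.TransGen (fun u v => T.parent u = some v) a a := by
  have h := T.reach_root a
  induction h using Relation.ReflTransGen.head_induction_on with
  | refl =>
      intro hcyc
      obtain ⟨b, hb, -⟩ := Relation.TransGen.head'_iff.mp hcyc
      rw [T.parent_root] at hb
      exact absurd hb.symm (Option.some_ne_none _)
  | head h' h ih =>
      rename_i a' c
      intro hcyc
      obtain ⟨b, hb, hba⟩ := Relation.TransGen.head'_iff.mp hcyc
      have hbc : c = b := by rw [h'] at hb; exact Option.some.inj hb
      subst hbc
      exact ih (Relation.TransGen.tail' hba h')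

lemma self_mem_pathNodes (v : T.V) : v ∈ T.pathNodes v := Relation.ReflTransGen.refl

lemma pathNodes_mono {u v : T.V} (h : u ∈ T.pathNodes v) : T.pathNodes u ⊆ T.pathNodes v :=
  fun _ hw => Relation.ReflTransGen.trans h hw

lemma region_mono {𝒞 : Set (Set (Fin n → ℝ))} {u v : T.V} (h : u ∈ T.pathNodes v) :
    T.region 𝒞 v ⊆ T.region 𝒞 u :=
  Set.sInter_subset_sInter
    (Set.union_subset_union_right _ (Set.image_mono (T.pathNodes_mono h)))

lemma mem_core_of_mem_region {𝒞 : Set (Set (Fin n → ℝ))} {v : T.V} {x : Fin n → ℝ}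
    (h : x ∈ T.region 𝒞 v) : x ∈ ⋂₀ 𝒞 :=
  Set.mem_sInter.mpr fun s hs => Set.mem_sInter.mp h s (Or.inl hs)

lemma mem_B_of_mem_region {𝒞 : Set (Set (Fin n → ℝ))} {v u : T.V} {x : Fin n → ℝ}
    (h : x ∈ T.region 𝒞 v) (hu : u ∈ T.pathNodes v) : x ∈ T.B u :=
  Set.mem_sInter.mp h _ (Or.inr ⟨u, hu, rfl⟩)

lemma region_root {𝒞 : Set (Set (Fin n → ℝ))} {x : Fin n → ℝ} (hx : x ∈ ⋂₀ 𝒞) :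
    x ∈ T.region 𝒞 T.root := by
  apply Set.mem_sInter.mpr
  rintro s (hs | ⟨u, hu, rfl⟩)
  · exact Set.mem_sInter.mp hx s hs
  · have : u = T.root := by
      rcases Relation.ReflTransGen.cases_head hu with h | ⟨c, hc, -⟩
      · exact h.symm
      · rw [T.parent_root] at hc; exact absurd hc.symm (Option.some_ne_none _)
    rw [this, T.B_root]
    exact Set.mem_univ x

lemma pathNodes_child {v' v : T.V} (h : T.parent v' = some v) :
    T.pathNodes v' = insert v' (T.pathNodes v) := by
  ext q
  rw [Set.mem_insert_iff]
  constructor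
  · intro hq
    rcases Relation.ReflTransGen.cases_head hq with rfl | ⟨c, hc, hcq⟩
    · exact Or.inl rfl
    · have hcv : v = c := by rw [h] at hc; exact Option.some.inj hc
      subst hcv
      exact Or.inr hcq
  · rintro (rfl | hq)
    · exact Relation.ReflTransGen.refl
    · exact Relation.ReflTransGen.head h hq

lemma child_not_mem {v' v : T.V} (h : T.parent v' = some v) : v' ∉ T.pathNodes v := by
  intro hv
  have hv' : Relation.ReflTransGen (fun a b => T.parent a = some b) v v' := hv
  exact T.no_loop v' (Relation.TransGen.head' h hv')

lemma depth_lt {v' v : T.V} (h : T.parent v' = some v) : T.depth v < T.depth v' := by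
  haveI := T.fin
  apply Set.ncard_lt_ncard _ (Set.toFinite _)
  rw [T.pathNodes_child h]
  exact Set.ssubset_insert (T.child_not_mem h)

lemma mem_region_child {𝒞 : Set (Set (Fin n → ℝ))} {v' v : T.V}
    (h : T.parent v' = some v) {x : Fin n → ℝ} :
    x ∈ T.region 𝒞 v' ↔ x ∈ T.region 𝒞 v ∧ x ∈ T.B v' := by
  simp only [region, pathCons, T.pathNodes_child h, Set.image_insert_eq, Set.union_insert,
    Set.sInter_insert, Set.mem_inter_iff]
  exact and_comm

lemma comparable {𝒞 : Set (Set (Fin n → ℝ))} (hcons : T.Consistent 𝒞) {u w : T.V}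
    {x : Fin n → ℝ} (hxu : x ∈ T.region 𝒞 u) (hxw : x ∈ T.region 𝒞 w) :
    u ∈ T.pathNodes w ∨ w ∈ T.pathNodes u := by
  haveI := T.fin
  by_contra hcon
  push_neg at hcon
  obtain ⟨h1, h2⟩ := hcon
  set S := T.pathNodes u ∩ T.pathNodes w with hS
  have hroot : T.root ∈ S := ⟨T.reach_root u, T.reach_root w⟩
  obtain ⟨p, hpS, hpmax⟩ := Set.exists_max_image S T.depth (Set.toFinite S) ⟨_, hroot⟩
  have hpu : p ≠ u := fun h => h1 (h ▸ hpS.2)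
  have hpw : p ≠ w := fun h => h2 (h ▸ hpS.1)
  rcases Relation.ReflTransGen.cases_tail hpS.1 with h | ⟨a₁, ha₁, hstep₁⟩
  · exact hpu h
  rcases Relation.ReflTransGen.cases_tail hpS.2 with h | ⟨a₂, ha₂, hstep₂⟩
  · exact hpw h
  have hxB1 : x ∈ T.B a₁ := T.mem_B_of_mem_region hxu ha₁
  have hxB2 : x ∈ T.B a₂ := T.mem_B_of_mem_region hxw ha₂
  have hne : a₁ ≠ a₂ := by
    rintro rfl
    have hmem : a₁ ∈ S := ⟨ha₁, ha₂⟩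
    have := hpmax a₁ hmem
    have := T.depth_lt hstep₁
    omega
  have hdisj := hcons.2.2.2 p a₁ a₂ hstep₁ hstep₂ hne
  have : sigApply (T.sig p) x ∈
      sigApply (T.sig p) '' T.B a₁ ∩ sigApply (T.sig p) '' T.B a₂ :=
    ⟨⟨x, hxB1, rfl⟩, ⟨x, hxB2, rfl⟩⟩
  rw [hdisj] at this
  exact this

lemma exists_dcn {𝒞 : Set (Set (Fin n → ℝ))} (x y : Fin n → ℝ)
    (hx : x ∈ ⋂₀ 𝒞) (hy : y ∈ ⋂₀ 𝒞) : ∃ v, T.IsDCN 𝒞 v x y := by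
  haveI := T.fin
  have hroot : T.root ∈ {v : T.V | x ∈ T.region 𝒞 v ∧ y ∈ T.region 𝒞 v} :=
    ⟨T.region_root hx, T.region_root hy⟩
  obtain ⟨v, hvS, hmax⟩ := Set.exists_max_image _ T.depth
    (Set.toFinite {v : T.V | x ∈ T.region 𝒞 v ∧ y ∈ T.region 𝒞 v}) ⟨_, hroot⟩
  exact ⟨v, hvS.1, hvS.2, fun w hw1 hw2 => hmax w ⟨hw1, hw2⟩⟩

lemma IsDCN.symm {𝒞 : Set (Set (Fin n → ℝ))} {v : T.V} {x y : Fin n → ℝ}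
    (h : T.IsDCN 𝒞 v x y) : T.IsDCN 𝒞 v y x :=
  ⟨h.2.1, h.1, fun w a b => h.2.2 w b a⟩

lemma sig_prefix {𝒞 : Set (Set (Fin n → ℝ))} (hcons : T.Consistent 𝒞) {u v : T.V}
    (h : u ∈ T.pathNodes v) : T.sig u <+: T.sig v := by
  induction h using Relation.ReflTransGen.head_induction_on with
  | refl => exact List.prefix_refl _
  | head h' h ih => exact ih.trans (hcons.2.1 _ _ h')

lemma dcn_sig_ne {𝒞 : Set (Set (Fin n → ℝ))} (hcons : T.Consistent 𝒞) {v u : T.V}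
    {p q : Fin n → ℝ} (hdcn : T.IsDCN 𝒞 v p q) (hvu : v ∈ T.pathNodes u) (hne : u ≠ v)
    (hpu : p ∈ T.region 𝒞 u) :
    sigApply (T.sig v) p ≠ sigApply (T.sig v) q := by
  intro heq
  rcases Relation.ReflTransGen.cases_tail hvu with h | ⟨v', hv', hstep⟩
  · exact hne h.symm
  have hpB : p ∈ T.B v' := T.mem_B_of_mem_region hpu hv'
  have hq𝒞 : q ∈ ⋂₀ 𝒞 := T.mem_core_of_mem_region hdcn.2.1
  have hcover := hcons.1 v ⟨v', hstep⟩ hq𝒞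
  rw [Set.mem_iUnion₂] at hcover
  obtain ⟨v'', hv'', hqB⟩ := hcover
  have hv'eq : v'' = v' := by
    by_contra hne2
    have hdisj := hcons.2.2.2 v v'' v' hv'' hstep hne2
    have hmem : sigApply (T.sig v) q ∈
        sigApply (T.sig v) '' T.B v'' ∩ sigApply (T.sig v) '' T.B v' :=
      ⟨⟨q, hqB, rfl⟩, ⟨p, hpB, heq⟩⟩
    rw [hdisj] at hmem
    exact hmem
  rw [hv'eq] at hqB
  have hpv' : p ∈ T.region 𝒞 v' := (T.mem_region_child hstep).mpr ⟨hdcn.1, hpB⟩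
  have hqv' : q ∈ T.region 𝒞 v' := (T.mem_region_child hstep).mpr ⟨hdcn.2.1, hqB⟩
  have h1 := hdcn.2.2 v' hpv' hqv'
  have h2 := T.depth_lt hstep
  omega

lemma treeGe_trans {𝒞 : Set (Set (Fin n → ℝ))} {ε : ℝ} (hcons : T.Consistent 𝒞)
    (hε : 0 < ε) {a b c : Fin n → ℝ} (ha : a ∈ ⋂₀ 𝒞) (hc : c ∈ ⋂₀ 𝒞)
    (h1 : T.TreeGe 𝒞 ε a b) (h2 : T.TreeGe 𝒞 ε b c) : T.TreeGe 𝒞 ε a c := by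
  obtain ⟨v, hv, rv⟩ := h1
  obtain ⟨w, hw, rw'⟩ := h2
  obtain ⟨u, hu⟩ := T.exists_dcn a c ha hc
  refine ⟨u, hu, ?_⟩
  have cuv := T.comparable hcons hu.1 hv.1
  have cuw := T.comparable hcons hu.2.1 hw.2.1
  by_cases hvu : v ∈ T.pathNodes u ∧ u ≠ v
  · obtain ⟨hvu, hneuv⟩ := hvu
    have hgt_ab : lexGt ε (sigApply (T.sig v) a) (sigApply (T.sig v) b) := by
      have hne := T.dcn_sig_ne hcons hv hvu hneuv hu.1
      rcases rv with h | h
      · exact absurd h hne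
      · exact h
    have hbc_v : sigApply (T.sig v) b = sigApply (T.sig v) c ∨
        lexGt ε (sigApply (T.sig v) b) (sigApply (T.sig v) c) := by
      rcases T.comparable hcons hv.2.1 hw.1 with hvw | hwv
      · exact sigRel_restrict (T.sig_prefix hcons hvw) rw'
      · rcases eq_or_ne w v with rfl | hwvne
        · exact rw'
        · have hne := T.dcn_sig_ne hcons hw hwv (Ne.symm hwvne) hv.2.1
          rcases rw' with h | h
          · exact absurd h hne
          · exact Or.inr (lexGt_sig_extend (T.sig_prefix hcons hwv) h)
    have hgt : lexGt ε (sigApply (T.sig v) a) (sigApply (T.sig v) c) := by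
      rcases hbc_v with h | h
      · rwa [h] at hgt_ab
      · exact lexGt_trans hε _ _ _ hgt_ab h
    exact Or.inr (lexGt_sig_extend (T.sig_prefix hcons hvu) hgt)
  · have huv : u ∈ T.pathNodes v := by
      rcases cuv with h | h
      · exact h
      · rcases eq_or_ne u v with rfl | hne
        · exact T.self_mem_pathNodes u
        · exact absurd ⟨h, hne⟩ hvu
    have Ruab := sigRel_restrict (T.sig_prefix hcons huv) rv
    have Rubc : sigApply (T.sig u) b = sigApply (T.sig u) c ∨
        lexGt ε (sigApply (T.sig u) b) (sigApply (T.sig u) c) := by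
      rcases cuw with h | h
      · exact sigRel_restrict (T.sig_prefix hcons h) rw'
      · rcases eq_or_ne w u with rfl | hne
        · exact rw'
        · have hne2 := T.dcn_sig_ne hcons (BranchingTree.IsDCN.symm T hw) h (Ne.symm hne) hu.2.1
          rcases rw' with hh | hh
          · exact absurd hh (fun he => hne2 he.symm)
          · exact Or.inr (lexGt_sig_extend (T.sig_prefix hcons h) hh)
    exact sigRel_comb hε Ruab Rubc

end BranchingTree

/-- redundance-based strengthening rule: if
`(𝒞, 𝒟, g, z, T, ε)` is `(F, f)`-valid and there is a witness `ω : ℝⁿ → ℝⁿ`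
such that every `x ∈ ⋂(𝒞 ∪ 𝒟)` with `x ∉ C` satisfies
`ω x ∈ ⋂(𝒞 ∪ 𝒟 ∪ {C})`, `ω x ⪰_T x`, and `g (ω x) ≤ g x`, then
`(𝒞, 𝒟 ∪ {C}, g, z, T, ε)` is also `(F, f)`-valid. -/
theorem redundance_strengthening {n : ℕ} (F : Set (Fin n → ℝ))
    (f : (Fin n → ℝ) → ℝ) (K : Config n) (hV : K.Valid F f)
    (C : Set (Fin n → ℝ)) (ω : (Fin n → ℝ) → (Fin n → ℝ))
    (hω : ∀ x : Fin n → ℝ, x ∈ ⋂₀ (K.core ∪ K.derived) → x ∉ C →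
      ω x ∈ ⋂₀ (K.core ∪ K.derived ∪ {C}) ∧
      K.tree.TreeGe K.core K.eps (ω x) x ∧ K.g (ω x) ≤ K.g x) :
    Config.Valid F f
      { core := K.core, derived := insert C K.derived, g := K.g, z := K.z,
        tree := K.tree, eps := K.eps } := by
  obtain ⟨⟨hcons, hε⟩, h2, h3, h4⟩ := hV
  refine ⟨⟨hcons, hε⟩, h2, h3, ?_⟩
  intro x hx hgx
  obtain ⟨y, hy, hge, hgy⟩ := h4 x hx hgx
  by_cases hyC : y ∈ C
  · refine ⟨y, ?_, hge, hgy⟩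
    apply Set.mem_sInter.mpr
    rintro s (hs | hs)
    · exact Set.mem_sInter.mp hy s (Or.inl hs)
    · rcases hs with rfl | hs
      · exact hyC
      · exact Set.mem_sInter.mp hy s (Or.inr hs)
  · obtain ⟨hω1, hω2, hω3⟩ := hω y hy hyC
    have hunion : K.core ∪ insert C K.derived = K.core ∪ K.derived ∪ {C} := by
      ext s
      simp only [Set.mem_union, Set.mem_insert_iff, Set.mem_singleton_iff]
      tauto
    refine ⟨ω y, ?_, ?_, le_trans hω3 hgy⟩
    · rw [hunion]; exact hω1
    · have hωc : ω y ∈ ⋂₀ K.core := Set.mem_sInter.mpr fun s hs =>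
        Set.mem_sInter.mp hω1 s (Or.inl (Or.inl hs))
      exact K.tree.treeGe_trans hcons hε hωc hx hω2 hge
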